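/- For d ≥ 3, the Kneser graph K(2d+1, d) has girth 6. -/

import Mathlib

open Finset

/-- The Kneser graph `K(n,d)`. -/
def kneser (n d : ℕ) : SimpleGraph {s : Finset (Fin n) // s.card = d} where
  Adj A B := A ≠ B ∧ Disjoint A.val B.val
  symm := ⟨fun _ _ h => ⟨h.1.symm, h.2.symm⟩⟩
  loopless := ⟨fun _ h => h.1 rfl⟩

lemma kneser_no3 {d : ℕ} (hd : 3 ≤ d) {A B C : Finset (Fin (2 * d + 1))}
    (hA : A.card = d) (hB : B.card = d) (hC : C.card = d)
    (dAB : Disjoint A B) (dBC : Disjoint B C) (dCA : Disjoint C A) : False := by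
  have h1 : (A ∪ B ∪ C).card = 3 * d := by
    rw [card_union_of_disjoint (disjoint_union_left.mpr ⟨dCA.symm, dBC⟩),
      card_union_of_disjoint dAB, hA, hB, hC]; ring
  have h2 := card_le_univ (A ∪ B ∪ C)
  rw [Fintype.card_fin] at h2
  omega

lemma kneser_no4 {d : ℕ} (hd : 3 ≤ d) {A B C D : Finset (Fin (2 * d + 1))}
    (hA : A.card = d) (hB : B.card = d) (hC : C.card = d) (hD : D.card = d)
    (hAC : A ≠ C) (hBD : B ≠ D)
    (dAB : Disjoint A B) (dBC : Disjoint B C) (dCD : Disjoint C D)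
    (dDA : Disjoint D A) : False := by
  have hBDcap : (B ∩ D).card < d := by
    have hle : (B ∩ D).card ≤ d := le_trans (card_le_card inter_subset_left) hB.le
    rcases lt_or_eq_of_le hle with h | h
    · exact h
    · exfalso
      have heq : B ∩ D = B := eq_of_subset_of_card_le inter_subset_left (by omega)
      have hBsub : B ⊆ D := fun x hx => mem_inter.mp (heq ▸ hx) |>.2
      exact hBD (eq_of_subset_of_card_le hBsub (by omega))
  have hcup : d + 1 ≤ (B ∪ D).card := by
    have := card_union_add_card_inter B D
    omega
  have hcompl : ((B ∪ D)ᶜ).card ≤ d := by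
    rw [card_compl, Fintype.card_fin]
    omega
  have hAsub : A ⊆ (B ∪ D)ᶜ := by
    intro x hx
    simp only [mem_compl, mem_union]
    push_neg
    exact ⟨fun h => disjoint_left.mp dAB hx h, fun h => disjoint_right.mp dDA hx h⟩
  have hCsub : C ⊆ (B ∪ D)ᶜ := by
    intro x hx
    simp only [mem_compl, mem_union]
    push_neg
    exact ⟨fun h => disjoint_right.mp dBC hx h, fun h => disjoint_left.mp dCD hx h⟩
  have h1 : A = (B ∪ D)ᶜ := eq_of_subset_of_card_le hAsub (by omega)
  have h2 : C = (B ∪ D)ᶜ := eq_of_subset_of_card_le hCsub (by omega)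
  exact hAC (h1.trans h2.symm)

lemma kneser_no5 {d : ℕ} (hd : 3 ≤ d) {A1 A2 A3 A4 A5 : Finset (Fin (2 * d + 1))}
    (h1 : A1.card = d) (h2 : A2.card = d) (h3 : A3.card = d) (h4 : A4.card = d)
    (h5 : A5.card = d)
    (d12 : Disjoint A1 A2) (d23 : Disjoint A2 A3) (d34 : Disjoint A3 A4)
    (d45 : Disjoint A4 A5) (d51 : Disjoint A5 A1) : False := by
  have key : ∀ (X Y Z : Finset (Fin (2 * d + 1))), X.card = d → Y.card = d → Z.card = d →
      Disjoint X Y → Disjoint Y Z → d - 1 ≤ (X ∩ Z).card := by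
    intro X Y Z hX hY hZ dXY dYZ
    have hsub : X ∪ Z ⊆ Yᶜ := by
      apply union_subset <;> intro x hx <;> simp only [mem_compl]
      · exact fun h => disjoint_left.mp dXY hx h
      · exact fun h => disjoint_right.mp dYZ hx h
    have hYc : (Yᶜ).card = d + 1 := by
      rw [card_compl, Fintype.card_fin]
      omega
    have hle := le_trans (card_le_card hsub) hYc.le
    have := card_union_add_card_inter X Z
    omega
  have k13 : d - 1 ≤ (A1 ∩ A3).card := key A1 A2 A3 h1 h2 h3 d12 d23
  have k35 : d - 1 ≤ (A3 ∩ A5).card := key A3 A4 A5 h3 h4 h5 d34 d45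
  have hdisj : Disjoint (A1 ∩ A3) (A3 ∩ A5) :=
    (d51.symm).mono inter_subset_left inter_subset_right
  have hsub : (A1 ∩ A3) ∪ (A3 ∩ A5) ⊆ A3 :=
    union_subset inter_subset_right inter_subset_left
  have hle := le_trans (card_le_card hsub) h3.le
  rw [card_union_of_disjoint hdisj] at hle
  omega

lemma kneser_six_le_cycle {d : ℕ} (hd : 3 ≤ d)
    (a : {s : Finset (Fin (2 * d + 1)) // s.card = d})
    (w : (kneser (2 * d + 1) d).Walk a a) (hw : w.IsCycle) : 6 ≤ w.length := by
  by_contra hlen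
  push_neg at hlen
  have hcyc3 := hw.three_le_length
  cases w with
  | nil => simp at hcyc3
  | cons h1 w =>
    rename_i b1
    cases w with
    | nil => simp at hcyc3
    | cons h2 w =>
      rename_i b2
      cases w with
      | nil => simp at hcyc3
      | cons h3 w =>
        rename_i b3
        cases w with
        | nil =>
          exact kneser_no3 hd a.2 b1.2 b2.2 h1.2 h2.2 h3.2
        | cons h4 w =>
          rename_i b4
          cases w with
          | nil =>
            have hnd := hw.2
            simp [SimpleGraph.Walk.support_cons] at hnd
            obtain ⟨x1, x2, x3⟩ := hnd
            exact kneser_no4 hd a.2 b1.2 b2.2 b3.2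
              (fun h => x2.2 (Subtype.ext h).symm) (fun h => x1.2.1 (Subtype.ext h))
              h1.2 h2.2 h3.2 h4.2
          | cons h5 w =>
            rename_i b5
            cases w with
            | nil =>
              exact kneser_no5 hd a.2 b1.2 b2.2 b3.2 b4.2 h1.2 h2.2 h3.2 h4.2 h5.2
            | cons h6 w =>
              simp [SimpleGraph.Walk.length_cons] at hlen
              omega


/-- An interval with one extra element adjoined, as a `Finset ℕ`. -/
def nset (a b e : ℕ) : Finset ℕ := insert e (Ico a b)

lemma mem_nset {a b e m : ℕ} : m ∈ nset a b e ↔ m = e ∨ (a ≤ m ∧ m < b) := by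
  simp [nset, mem_Ico]

lemma card_nset {a b e : ℕ} (h : ¬(a ≤ e ∧ e < b)) : (nset a b e).card = b - a + 1 := by
  rw [nset, card_insert_of_notMem (by simp [mem_Ico]; omega), Nat.card_Ico]

/-- The vertex of the Kneser graph corresponding to `nset a b e`. -/
def kv (d a b e : ℕ) (hb : ∀ m ∈ nset a b e, m < 2 * d + 1)
    (hc : (nset a b e).card = d) : {s : Finset (Fin (2 * d + 1)) // s.card = d} :=
  ⟨(nset a b e).attachFin hb, by rw [Finset.card_attachFin]; exact hc⟩

lemma kv_ne {d a b e a' b' e' : ℕ} {hb hc hb' hc'} {m : ℕ} (hm : m < 2 * d + 1)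
    (h1 : m ∈ nset a b e) (h2 : m ∉ nset a' b' e') :
    kv d a b e hb hc ≠ kv d a' b' e' hb' hc' := by
  intro h
  have hv := congrArg Subtype.val h
  simp only [kv] at hv
  have hmem : (⟨m, hm⟩ : Fin (2 * d + 1)) ∈ (nset a b e).attachFin hb :=
    (Finset.mem_attachFin _).mpr h1
  rw [hv, Finset.mem_attachFin] at hmem
  exact h2 hmem

lemma kv_adj {d a b e a' b' e' : ℕ} {hb hc hb' hc'} (hd : 0 < d)
    (h : Disjoint (nset a b e) (nset a' b' e')) :
    (kneser (2 * d + 1) d).Adj (kv d a b e hb hc) (kv d a' b' e' hb' hc') := by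
  have hdisj : Disjoint ((nset a b e).attachFin hb) ((nset a' b' e').attachFin hb') := by
    rw [Finset.disjoint_left] at h ⊢
    intro x hx hx'
    exact h ((Finset.mem_attachFin _).mp hx) ((Finset.mem_attachFin _).mp hx')
  refine ⟨?_, hdisj⟩
  intro heq
  have hv := congrArg Subtype.val heq
  simp only [kv] at hv
  have hself : Disjoint ((nset a b e).attachFin hb) ((nset a b e).attachFin hb) := by
    conv_rhs => rw [hv]
    exact hdisj
  have hemp : (nset a b e).attachFin hb = ∅ := by simpa using disjoint_self.mp hself
  have := Finset.card_attachFin (nset a b e) hb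
  rw [hemp, hc] at this
  simp at this
  omega


lemma six_cycle_isCycle {V : Type*} {G : SimpleGraph V} {v1 v2 v3 v4 v5 v6 : V}
    (a12 : G.Adj v1 v2) (a23 : G.Adj v2 v3) (a34 : G.Adj v3 v4)
    (a45 : G.Adj v4 v5) (a56 : G.Adj v5 v6) (a61 : G.Adj v6 v1)
    (n13 : v1 ≠ v3) (n14 : v1 ≠ v4) (n15 : v1 ≠ v5)
    (n24 : v2 ≠ v4) (n25 : v2 ≠ v5) (n26 : v2 ≠ v6)
    (n35 : v3 ≠ v5) (n36 : v3 ≠ v6) (n46 : v4 ≠ v6) :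
    (SimpleGraph.Walk.cons a12 (.cons a23 (.cons a34 (.cons a45
      (.cons a56 (.cons a61 .nil)))))).IsCycle := by
  have n12 := a12.ne
  have n23 := a23.ne
  have n34 := a34.ne
  have n45 := a45.ne
  have n56 := a56.ne
  have n61 := a61.ne
  rw [SimpleGraph.Walk.isCycle_def]
  refine ⟨?_, by simp, ?_⟩
  · rw [SimpleGraph.Walk.isTrail_def]
    simp only [SimpleGraph.Walk.edges_cons, SimpleGraph.Walk.edges_nil, List.nodup_cons,
      List.mem_cons, List.not_mem_nil, or_false, List.nodup_nil, and_true, Sym2.eq_iff]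
    push_neg
    refine ⟨⟨?_,?_,?_,?_,?_⟩,⟨?_,?_,?_,?_⟩,⟨?_,?_,?_⟩,⟨?_,?_⟩,?_⟩ <;> tauto
  · simp only [SimpleGraph.Walk.support_cons, SimpleGraph.Walk.support_nil, List.tail_cons,
      List.nodup_cons, List.mem_cons, List.not_mem_nil, or_false, List.nodup_nil, and_true,
      List.mem_singleton]
    push_neg
    refine ⟨⟨?_,?_,?_,?_,?_⟩,⟨?_,?_,?_,?_⟩,⟨?_,?_,?_⟩,⟨?_,?_⟩,?_⟩ <;> tauto

lemma kneser_egirth_le {d : ℕ} (hd : 3 ≤ d) : (kneser (2 * d + 1) d).egirth ≤ 6 := by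
  have hb1 : ∀ m ∈ nset 0 (d-1) (2*d-2), m < 2*d+1 := by
    intro m hm; rw [mem_nset] at hm; omega
  have hb2 : ∀ m ∈ nset (d-1) (2*d-2) (2*d-1), m < 2*d+1 := by
    intro m hm; rw [mem_nset] at hm; omega
  have hb3 : ∀ m ∈ nset 0 (d-1) (2*d), m < 2*d+1 := by
    intro m hm; rw [mem_nset] at hm; omega
  have hb4 : ∀ m ∈ nset (d-1) (2*d-2) (2*d-2), m < 2*d+1 := by
    intro m hm; rw [mem_nset] at hm; omega
  have hb5 : ∀ m ∈ nset 0 (d-1) (2*d-1), m < 2*d+1 := by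
    intro m hm; rw [mem_nset] at hm; omega
  have hb6 : ∀ m ∈ nset (d-1) (2*d-2) (2*d), m < 2*d+1 := by
    intro m hm; rw [mem_nset] at hm; omega
  have hc1 : (nset 0 (d-1) (2*d-2)).card = d := by rw [card_nset (by omega)]; omega
  have hc2 : (nset (d-1) (2*d-2) (2*d-1)).card = d := by rw [card_nset (by omega)]; omega
  have hc3 : (nset 0 (d-1) (2*d)).card = d := by rw [card_nset (by omega)]; omega
  have hc4 : (nset (d-1) (2*d-2) (2*d-2)).card = d := by rw [card_nset (by omega)]; omega
  have hc5 : (nset 0 (d-1) (2*d-1)).card = d := by rw [card_nset (by omega)]; omega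
  have hc6 : (nset (d-1) (2*d-2) (2*d)).card = d := by rw [card_nset (by omega)]; omega
  have hdpos : 0 < d := by omega
  -- adjacency proofs
  have a12 := kv_adj (hb := hb1) (hc := hc1) (hb' := hb2) (hc' := hc2) hdpos
    (by rw [Finset.disjoint_left]; intro m hm hm'; rw [mem_nset] at hm hm'; omega)
  have a23 := kv_adj (hb := hb2) (hc := hc2) (hb' := hb3) (hc' := hc3) hdpos
    (by rw [Finset.disjoint_left]; intro m hm hm'; rw [mem_nset] at hm hm'; omega)
  have a34 := kv_adj (hb := hb3) (hc := hc3) (hb' := hb4) (hc' := hc4) hdpos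
    (by rw [Finset.disjoint_left]; intro m hm hm'; rw [mem_nset] at hm hm'; omega)
  have a45 := kv_adj (hb := hb4) (hc := hc4) (hb' := hb5) (hc' := hc5) hdpos
    (by rw [Finset.disjoint_left]; intro m hm hm'; rw [mem_nset] at hm hm'; omega)
  have a56 := kv_adj (hb := hb5) (hc := hc5) (hb' := hb6) (hc' := hc6) hdpos
    (by rw [Finset.disjoint_left]; intro m hm hm'; rw [mem_nset] at hm hm'; omega)
  have a61 := kv_adj (hb := hb6) (hc := hc6) (hb' := hb1) (hc' := hc1) hdpos
    (by rw [Finset.disjoint_left]; intro m hm hm'; rw [mem_nset] at hm hm'; omega)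
  have n13 : kv d 0 (d-1) (2*d-2) hb1 hc1 ≠ kv d 0 (d-1) (2*d) hb3 hc3 :=
    kv_ne (m := 2*d-2) (by omega) (by rw [mem_nset]; omega) (by rw [mem_nset]; omega)
  have n15 : kv d 0 (d-1) (2*d-2) hb1 hc1 ≠ kv d 0 (d-1) (2*d-1) hb5 hc5 :=
    kv_ne (m := 2*d-2) (by omega) (by rw [mem_nset]; omega) (by rw [mem_nset]; omega)
  have n35 : kv d 0 (d-1) (2*d) hb3 hc3 ≠ kv d 0 (d-1) (2*d-1) hb5 hc5 :=
    kv_ne (m := 2*d) (by omega) (by rw [mem_nset]; omega) (by rw [mem_nset]; omega)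
  have n24 : kv d (d-1) (2*d-2) (2*d-1) hb2 hc2 ≠ kv d (d-1) (2*d-2) (2*d-2) hb4 hc4 :=
    kv_ne (m := 2*d-1) (by omega) (by rw [mem_nset]; omega) (by rw [mem_nset]; omega)
  have n26 : kv d (d-1) (2*d-2) (2*d-1) hb2 hc2 ≠ kv d (d-1) (2*d-2) (2*d) hb6 hc6 :=
    kv_ne (m := 2*d-1) (by omega) (by rw [mem_nset]; omega) (by rw [mem_nset]; omega)
  have n46 : kv d (d-1) (2*d-2) (2*d-2) hb4 hc4 ≠ kv d (d-1) (2*d-2) (2*d) hb6 hc6 :=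
    kv_ne (m := 2*d-2) (by omega) (by rw [mem_nset]; omega) (by rw [mem_nset]; omega)
  have n14 : kv d 0 (d-1) (2*d-2) hb1 hc1 ≠ kv d (d-1) (2*d-2) (2*d-2) hb4 hc4 :=
    kv_ne (m := 0) (by omega) (by rw [mem_nset]; omega) (by rw [mem_nset]; omega)
  have n25 : kv d (d-1) (2*d-2) (2*d-1) hb2 hc2 ≠ kv d 0 (d-1) (2*d-1) hb5 hc5 :=
    (kv_ne (m := 0) (by omega) (by rw [mem_nset]; omega) (by rw [mem_nset]; omega)).symm
  have n36 : kv d 0 (d-1) (2*d) hb3 hc3 ≠ kv d (d-1) (2*d-2) (2*d) hb6 hc6 :=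
    kv_ne (m := 0) (by omega) (by rw [mem_nset]; omega) (by rw [mem_nset]; omega)
  have hcyc := six_cycle_isCycle a12 a23 a34 a45 a56 a61 n13 n14 n15 n24 n25 n26 n35 n36 n46
  rw [SimpleGraph.egirth]
  refine le_trans (iInf_le _ _) (le_trans (iInf_le _ _) (le_trans (iInf_le _ hcyc) ?_))
  norm_num


/-- For `d ≥ 3`, the Kneser graph `K(2d+1,d)` has girth 6. -/
theorem kneser_girth (d : ℕ) (hd : 3 ≤ d) : (kneser (2 * d + 1) d).girth = 6 := by
  have hle := kneser_egirth_le hd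
  have hge : (6 : ℕ∞) ≤ (kneser (2 * d + 1) d).egirth :=
    SimpleGraph.le_egirth.mpr (fun a w hw => by exact_mod_cast kneser_six_le_cycle hd a w hw)
  have heq : (kneser (2 * d + 1) d).egirth = 6 := le_antisymm hle hge
  rw [SimpleGraph.girth, heq]
  rfl
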